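/- Let ω(x,t) be a real function with continuous second derivatives, and define the 2×2 matrix functions Ğ = −i( (ω_t/4) j + (1/2) sin(ω/2) J ) and F̆ = −i(ω_x/4) j + (1/2) cos(ω/2) J j, where J = [[0,1],[1,0]] and j = diag(1,−1). Then ω satisfies the sine-Gordon equation in laboratory coordinates, ω_xx − ω_tt = sin ω, if and only if the zero-curvature (compatibility) condition Ğ_t − F̆_x + Ğ F̆ − F̆ Ğ = 0 holds. -/

import Mathlib

open Complex Matrix Function Set
open scoped Matrix.Norms.L2Operator

/-- The matrix `J = [[0,1],[1,0]]`. -/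
noncomputable def Jmat : Matrix (Fin 2) (Fin 2) ℂ := !![0, 1; 1, 0]

/-- The signature matrix `j = diag(1,−1)`. -/
noncomputable def jmat : Matrix (Fin 2) (Fin 2) ℂ := !![1, 0; 0, -1]

/-- `Ğ = −i((ω_t/4) j + (1/2) sin(ω/2) J)` (y43). -/
noncomputable def Gbreve (ω ωt : ℝ → ℝ → ℝ) (x t : ℝ) : Matrix (Fin 2) (Fin 2) ℂ :=
  (-Complex.I) • (((ωt x t / 4 : ℝ) : ℂ) • jmat +
    ((Real.sin (ω x t / 2) / 2 : ℝ) : ℂ) • Jmat)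

/-- `F̆ = −i(ω_x/4) j + (1/2) cos(ω/2) J j` (y43). -/
noncomputable def Fbreve (ω ωx : ℝ → ℝ → ℝ) (x t : ℝ) : Matrix (Fin 2) (Fin 2) ℂ :=
  (-Complex.I * ((ωx x t / 4 : ℝ) : ℂ)) • jmat +
    ((Real.cos (ω x t / 2) / 2 : ℝ) : ℂ) • (Jmat * jmat)

/-- Explicit derivative of `Ğ` in `t`. -/
lemma hasDerivAt_Gbreve (ω ωt ωtt : ℝ → ℝ → ℝ) (x t : ℝ)
    (hωt : HasDerivAt (fun s => ω x s) (ωt x t) t)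
    (hωtt : HasDerivAt (fun s => ωt x s) (ωtt x t) t) :
    HasDerivAt (fun s => Gbreve ω ωt x s)
      ((-Complex.I) • (((ωtt x t / 4 : ℝ) : ℂ) • jmat +
        ((Real.cos (ω x t / 2) * (ωt x t / 2) / 2 : ℝ) : ℂ) • Jmat)) t := by
  have h1 : HasDerivAt (fun s => ((ωt x s / 4 : ℝ) : ℂ) • jmat)
      (((ωtt x t / 4 : ℝ) : ℂ) • jmat) t :=
    ((hωtt.div_const 4).ofReal_comp).smul_const jmat
  have h2 : HasDerivAt (fun s => ((Real.sin (ω x s / 2) / 2 : ℝ) : ℂ) • Jmat)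
      (((Real.cos (ω x t / 2) * (ωt x t / 2) / 2 : ℝ) : ℂ) • Jmat) t :=
    ((((hωt.div_const 2).sin).div_const 2).ofReal_comp).smul_const Jmat
  exact (h1.add h2).const_smul (-Complex.I)

/-- Explicit derivative of `F̆` in `x`. -/
lemma hasDerivAt_Fbreve (ω ωx ωxx : ℝ → ℝ → ℝ) (x t : ℝ)
    (hωx : HasDerivAt (fun s => ω s t) (ωx x t) x)
    (hωxx : HasDerivAt (fun s => ωx s t) (ωxx x t) x) :
    HasDerivAt (fun s => Fbreve ω ωx s t)
      ((-Complex.I * ((ωxx x t / 4 : ℝ) : ℂ)) • jmat +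
        (((-Real.sin (ω x t / 2)) * (ωx x t / 2) / 2 : ℝ) : ℂ) • (Jmat * jmat)) x := by
  have h1 : HasDerivAt (fun s => (-Complex.I * ((ωx s t / 4 : ℝ) : ℂ)) • jmat)
      ((-Complex.I * ((ωxx x t / 4 : ℝ) : ℂ)) • jmat) x :=
    (((hωxx.div_const 4).ofReal_comp).const_mul (-Complex.I)).smul_const jmat
  have h2 : HasDerivAt (fun s => ((Real.cos (ω s t / 2) / 2 : ℝ) : ℂ) • (Jmat * jmat))
      ((((-Real.sin (ω x t / 2)) * (ωx x t / 2) / 2 : ℝ) : ℂ) • (Jmat * jmat)) x :=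
    ((((hωx.div_const 2).cos).div_const 2).ofReal_comp).smul_const (Jmat * jmat)
  exact h1.add h2

/-- The key algebraic computation. -/
lemma key_matrix (ω ωx ωt ωxx ωtt : ℝ → ℝ → ℝ) (x t : ℝ) :
    (-Complex.I) • (((ωtt x t / 4 : ℝ) : ℂ) • jmat +
        ((Real.cos (ω x t / 2) * (ωt x t / 2) / 2 : ℝ) : ℂ) • Jmat)
      - ((-Complex.I * ((ωxx x t / 4 : ℝ) : ℂ)) • jmat +
        (((-Real.sin (ω x t / 2)) * (ωx x t / 2) / 2 : ℝ) : ℂ) • (Jmat * jmat))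
      + Gbreve ω ωt x t * Fbreve ω ωx x t - Fbreve ω ωx x t * Gbreve ω ωt x t
    = (-Complex.I * (((ωtt x t - ωxx x t) / 4 +
        Real.sin (ω x t / 2) * Real.cos (ω x t / 2) / 2 : ℝ) : ℂ)) • jmat := by
  ext i k
  fin_cases i <;> fin_cases k <;>
    simp [Gbreve, Fbreve, Jmat, jmat, Matrix.mul_apply, Fin.sum_univ_two] <;>
    ring_nf <;> simp [Complex.I_sq] <;> ring_nf

/-- The sine-Gordon equation (y36) is equivalent to the zero curvature
(compatibility) condition `Ğ_t − F̆_x + Ğ F̆ − F̆ Ğ = 0` for the pair (y43). -/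
theorem sineGordon_iff_zeroCurvature
    (ω ωx ωt ωxx ωtt : ℝ → ℝ → ℝ)
    (hω : ContDiff ℝ 2 (uncurry ω))
    (hωx : ∀ x t : ℝ, HasDerivAt (fun s => ω s t) (ωx x t) x)
    (hωt : ∀ x t : ℝ, HasDerivAt (fun s => ω x s) (ωt x t) t)
    (hωxx : ∀ x t : ℝ, HasDerivAt (fun s => ωx s t) (ωxx x t) x)
    (hωtt : ∀ x t : ℝ, HasDerivAt (fun s => ωt x s) (ωtt x t) t)
    (Gt Fx : ℝ → ℝ → Matrix (Fin 2) (Fin 2) ℂ)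
    (hGt : ∀ x t : ℝ, HasDerivAt (fun s => Gbreve ω ωt x s) (Gt x t) t)
    (hFx : ∀ x t : ℝ, HasDerivAt (fun s => Fbreve ω ωx s t) (Fx x t) x) :
    (∀ x t : ℝ, ωxx x t - ωtt x t = Real.sin (ω x t)) ↔
    (∀ x t : ℝ,
      Gt x t - Fx x t + Gbreve ω ωt x t * Fbreve ω ωx x t -
        Fbreve ω ωx x t * Gbreve ω ωt x t = 0) := by
  have hGt' : ∀ x t : ℝ, Gt x t = (-Complex.I) • (((ωtt x t / 4 : ℝ) : ℂ) • jmat +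
      ((Real.cos (ω x t / 2) * (ωt x t / 2) / 2 : ℝ) : ℂ) • Jmat) := fun x t =>
    (hGt x t).unique (hasDerivAt_Gbreve ω ωt ωtt x t (hωt x t) (hωtt x t))
  have hFx' : ∀ x t : ℝ, Fx x t = (-Complex.I * ((ωxx x t / 4 : ℝ) : ℂ)) • jmat +
      (((-Real.sin (ω x t / 2)) * (ωx x t / 2) / 2 : ℝ) : ℂ) • (Jmat * jmat) := fun x t =>
    (hFx x t).unique (hasDerivAt_Fbreve ω ωx ωxx x t (hωx x t) (hωxx x t))
  have hmain : ∀ x t : ℝ, Gt x t - Fx x t + Gbreve ω ωt x t * Fbreve ω ωx x t -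
      Fbreve ω ωx x t * Gbreve ω ωt x t
      = (-Complex.I * (((ωtt x t - ωxx x t) / 4 +
          Real.sin (ω x t / 2) * Real.cos (ω x t / 2) / 2 : ℝ) : ℂ)) • jmat := by
    intro x t
    rw [hGt' x t, hFx' x t]
    exact key_matrix ω ωx ωt ωxx ωtt x t
  have hsin : ∀ x t : ℝ, Real.sin (ω x t) =
      2 * (Real.sin (ω x t / 2) * Real.cos (ω x t / 2)) := by
    intro x t
    have h := Real.sin_two_mul (ω x t / 2)
    rw [show 2 * (ω x t / 2) = ω x t by ring] at h
    linarith
  constructor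
  · intro h x t
    rw [hmain x t]
    have hc : ((ωtt x t - ωxx x t) / 4 +
        Real.sin (ω x t / 2) * Real.cos (ω x t / 2) / 2 : ℝ) = 0 := by
      have := h x t
      rw [hsin x t] at this
      linarith
    rw [hc]
    simp
  · intro h x t
    have h0 := h x t
    rw [hmain x t] at h0
    have h1 := congrFun (congrFun h0 0) 0
    simp [jmat, mul_eq_zero, Complex.I_ne_zero, Complex.ofReal_eq_zero] at h1
    have hc : ((ωtt x t - ωxx x t) / 4 +
        Real.sin (ω x t / 2) * Real.cos (ω x t / 2) / 2 : ℝ) = 0 := by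
      have h2 : (((ωtt x t - ωxx x t) / 4 +
          Real.sin (ω x t / 2) * Real.cos (ω x t / 2) / 2 : ℝ) : ℂ) = 0 := by
        push_cast at h1 ⊢; exact h1
      exact_mod_cast h2
    rw [hsin x t]
    linarith
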